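/- For every x=(x₂,x₃)∈ℝ² with x₃ ≠ 0, the function B satisfies (HB)(x) = 2i·B(x), where H is the operator (Hg)(x) = (−i/(4π))·(∂²g/∂x₂² − ∂²g/∂x₃²)(x) + πi·(x₂²−x₃²)·g(x). (From the proof of paper Proposition 5.12: B is an eigenfunction of weight 2 of the infinitesimal generator of SO(2) in the Weil representation, outside its singular set.) -/

import Mathlib

open MeasureTheory

/-- The upper incomplete gamma function `Γ(1/2, a) = ∫_a^∞ e^{-u} u^{-1/2} du`. -/
noncomputable def Ginc (a : ℝ) : ℝ := ∫ u in Set.Ioi a, Real.exp (-u) * u ^ (-(1:ℝ)/2)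

/-- The `e₃`-component `B` of the singular Schwartz function `ψ̃₀,₁`. -/
noncomputable def B (x : ℝ × ℝ) : ℝ :=
  -(1 / (2 * Real.sqrt 2 * Real.pi)) * Real.exp (-(Real.pi * (x.1 ^ 2 + x.2 ^ 2)))
  + (1 / (2 * Real.sqrt Real.pi)) * |x.2| * Ginc (2 * Real.pi * x.2 ^ 2) *
      Real.exp (-(Real.pi * (x.1 ^ 2 - x.2 ^ 2)))

/-- The infinitesimal generator `H` of `SO(2)` in the Weil representation attached to the
signature `(1,1)` plane, acting on a real-valued function `g` on `ℝ²`: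
`(Hg)(x) = (-i/(4π))·(∂²g/∂x₂² - ∂²g/∂x₃²)(x) + πi·(x₂²-x₃²)·g(x)`. -/
noncomputable def Hop (g : ℝ × ℝ → ℝ) (x : ℝ × ℝ) : ℂ :=
  (-Complex.I / (4 * (Real.pi : ℂ))) *
    ((deriv (deriv (fun t : ℝ => g (t, x.2))) x.1
      - deriv (deriv (fun t : ℝ => g (x.1, t))) x.2 : ℝ) : ℂ)
  + (Real.pi : ℂ) * Complex.I * ((x.1 ^ 2 - x.2 ^ 2 : ℝ) : ℂ) * ((g x : ℝ) : ℂ)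


lemma fInt_integrableOn : IntegrableOn (fun u : ℝ => Real.exp (-u) * u ^ (-(1:ℝ)/2)) (Set.Ioi 0) := by
  have h := Real.GammaIntegral_convergent (s := 1/2) (by norm_num)
  rw [show ((1:ℝ)/2 - 1) = -(1:ℝ)/2 from by norm_num] at h
  exact h

lemma fInt_integrableOn' {a : ℝ} (ha : 0 < a) :
    IntegrableOn (fun u : ℝ => Real.exp (-u) * u ^ (-(1:ℝ)/2)) (Set.Ioi a) :=
  fInt_integrableOn.mono_set (Set.Ioi_subset_Ioi ha.le)

lemma Ginc_sub {b t : ℝ} (hb : 0 < b) (hbt : b ≤ t) :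
    Ginc b = (∫ u in Set.Ioc b t, Real.exp (-u) * u ^ (-(1:ℝ)/2)) + Ginc t := by
  have hdisj : Disjoint (Set.Ioc b t) (Set.Ioi t) := by
    rw [Set.disjoint_left]
    rintro u hu1 hu2
    exact absurd hu1.2 (not_le.2 hu2)
  have h1 : IntegrableOn (fun u : ℝ => Real.exp (-u) * u ^ (-(1:ℝ)/2)) (Set.Ioc b t) :=
    (fInt_integrableOn' hb).mono_set Set.Ioc_subset_Ioi_self
  have h2 := fInt_integrableOn' (hb.trans_le hbt)
  rw [Ginc, Ginc, ← Set.Ioc_union_Ioi_eq_Ioi hbt,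
    MeasureTheory.setIntegral_union hdisj measurableSet_Ioi h1 h2]

lemma Ginc_eq_intervalIntegral {b t : ℝ} (hb : 0 < b) (ht : 0 < t) :
    Ginc t = Ginc b - ∫ u in b..t, Real.exp (-u) * u ^ (-(1:ℝ)/2) := by
  rcases le_total b t with h | h
  · rw [intervalIntegral.integral_of_le h]
    have := Ginc_sub hb h
    linarith
  · rw [intervalIntegral.integral_symm, intervalIntegral.integral_of_le h]
    have := Ginc_sub ht h
    linarith

lemma Ginc_hasDerivAt {a : ℝ} (ha : 0 < a) :
    HasDerivAt Ginc (-(Real.exp (-a) * a ^ (-(1:ℝ)/2))) a := by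
  set f : ℝ → ℝ := fun u => Real.exp (-u) * u ^ (-(1:ℝ)/2) with hf
  have hb : 0 < a / 2 := by positivity
  have hcont : ContinuousAt f a := by
    apply ContinuousAt.mul
    · exact (Real.continuous_exp.comp continuous_neg).continuousAt
    · exact Real.continuousAt_rpow_const a _ (Or.inl ha.ne')
  have hcontOn : ∀ y ∈ Set.Ioi (0:ℝ), ContinuousAt f y := by
    intro y hy
    exact ((Real.continuous_exp.comp continuous_neg).continuousAt).mul
      (Real.continuousAt_rpow_const y _ (Or.inl (ne_of_gt hy)))
  have hmeas := ContinuousAt.stronglyMeasurableAtFilter (μ := volume) isOpen_Ioi hcontOn a ha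
  have hInt : IntervalIntegrable f volume (a/2) a := by
    rw [intervalIntegrable_iff_integrableOn_Ioc_of_le (by linarith)]
    exact (fInt_integrableOn' hb).mono_set Set.Ioc_subset_Ioi_self
  have hFTC := intervalIntegral.integral_hasDerivAt_right hInt hmeas hcont
  have h2 : HasDerivAt (fun t => Ginc (a/2) - ∫ u in (a/2)..t, f u) (-(f a)) a := by
    simpa using hFTC.const_sub (Ginc (a/2))
  refine h2.congr_of_eventuallyEq ?_
  filter_upwards [eventually_gt_nhds ha] with t ht
  exact Ginc_eq_intervalIntegral hb ht

noncomputable def D1 (x1 ε t : ℝ) : ℝ :=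
  (1/(2*Real.sqrt 2*Real.pi)) * (2*Real.pi*t) * Real.exp (-(Real.pi*(x1^2+t^2)))
  + (1/(2*Real.sqrt Real.pi)) *
      (ε * Ginc (2*Real.pi*t^2) * (1+2*Real.pi*t^2) * Real.exp (-(Real.pi*(x1^2-t^2)))
       - 2*Real.sqrt (2*Real.pi) * t * Real.exp (-(Real.pi*(x1^2+t^2))))

noncomputable def D2 (x1 ε t : ℝ) : ℝ :=
  (1/(2*Real.sqrt 2*Real.pi)) * (2*Real.pi - 4*Real.pi^2*t^2) * Real.exp (-(Real.pi*(x1^2+t^2)))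
  - 4*Real.sqrt (2*Real.pi) * (1/(2*Real.sqrt Real.pi)) * Real.exp (-(Real.pi*(x1^2+t^2)))
  + (1/(2*Real.sqrt Real.pi)) * ε * Ginc (2*Real.pi*t^2) * t * (6*Real.pi + 4*Real.pi^2*t^2) *
      Real.exp (-(Real.pi*(x1^2-t^2)))

lemma hasDerivAt_expE (x1 t : ℝ) :
    HasDerivAt (fun s : ℝ => Real.exp (-(Real.pi*(x1^2+s^2))))
      (-(2*Real.pi*t) * Real.exp (-(Real.pi*(x1^2+t^2)))) t := by
  have h := (((hasDerivAt_pow 2 t).const_add (x1^2)).const_mul Real.pi).neg.exp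
  convert h using 1
  · rfl
  · simp only [Pi.neg_apply]; push_cast; ring

lemma hasDerivAt_expF (x1 t : ℝ) :
    HasDerivAt (fun s : ℝ => Real.exp (-(Real.pi*(x1^2-s^2))))
      ((2*Real.pi*t) * Real.exp (-(Real.pi*(x1^2-t^2)))) t := by
  have h := (((hasDerivAt_pow 2 t).const_sub (x1^2)).const_mul Real.pi).neg.exp
  convert h using 1
  · rfl
  · simp only [Pi.neg_apply]; push_cast; ring

lemma hasDerivAt_GG {t : ℝ} (ht : t ≠ 0) :
    HasDerivAt (fun s : ℝ => Ginc (2*Real.pi*s^2))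
      (-(Real.exp (-(2*Real.pi*t^2)) * (2*Real.pi*t^2) ^ (-(1:ℝ)/2)) * (4*Real.pi*t)) t := by
  have hpos : 0 < 2*Real.pi*t^2 := by positivity
  have hinner : HasDerivAt (fun s : ℝ => 2*Real.pi*s^2) (4*Real.pi*t) t := by
    have h := (hasDerivAt_pow 2 t).const_mul (2*Real.pi)
    refine h.congr_deriv ?_
    push_cast; ring
  exact (Ginc_hasDerivAt hpos).comp t hinner

lemma rpow_half_eq {ε t : ℝ} (hε : ε = 1 ∨ ε = -1) (ht : 0 < ε*t) :
    ((2*Real.pi*t^2 : ℝ)) ^ (-(1:ℝ)/2) = (Real.sqrt (2*Real.pi) * (ε*t))⁻¹ := by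
  have h0 : (0:ℝ) ≤ 2*Real.pi := by positivity
  have habs : |t| = ε * t := by
    rcases hε with rfl | rfl
    · rw [abs_of_pos (by linarith)]; ring
    · rw [abs_of_neg (by nlinarith)]; ring
  have hsq : Real.sqrt (2*Real.pi*t^2) = Real.sqrt (2*Real.pi) * (ε*t) := by
    rw [Real.sqrt_mul h0, Real.sqrt_sq_eq_abs, habs]
  rw [show (-(1:ℝ)/2) = -(1/2 : ℝ) by ring, Real.rpow_neg (by positivity),
    ← Real.sqrt_eq_rpow, hsq]

lemma hasDerivAt_Bfun (x1 : ℝ) {ε t : ℝ} (hε : ε = 1 ∨ ε = -1) (ht : 0 < ε * t) :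
    HasDerivAt (fun s : ℝ =>
        -(1/(2*Real.sqrt 2*Real.pi)) * Real.exp (-(Real.pi*(x1^2+s^2)))
        + (1/(2*Real.sqrt Real.pi)) * (ε*s) * Ginc (2*Real.pi*s^2) *
            Real.exp (-(Real.pi*(x1^2-s^2))))
      (D1 x1 ε t) t := by
  have htne : t ≠ 0 := by rintro rfl; simp at ht
  have hE := hasDerivAt_expE x1 t
  have hF := hasDerivAt_expF x1 t
  have hG := hasDerivAt_GG htne
  have hlin : HasDerivAt (fun s : ℝ => (1/(2*Real.sqrt Real.pi)) * (ε*s))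
      ((1/(2*Real.sqrt Real.pi)) * (ε*1)) t :=
    ((hasDerivAt_id t).const_mul ε).const_mul (1/(2*Real.sqrt Real.pi))
  have h2 := (hlin.mul hG).mul hF
  have h1 := hE.const_mul (-(1/(2*Real.sqrt 2*Real.pi)))
  have h := h1.add h2
  refine h.congr_deriv ?_
  simp only [Pi.mul_apply]
  rw [D1, rpow_half_eq hε ht]
  have hK : Real.exp (-(2*Real.pi*t^2))
      = Real.exp (-(Real.pi*(x1^2+t^2))) / Real.exp (-(Real.pi*(x1^2-t^2))) := by
    rw [eq_div_iff (Real.exp_ne_zero _), ← Real.exp_add]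
    congr 1; ring
  rw [hK]
  rcases hε with rfl | rfl <;>
  · rw [Real.sqrt_mul (by norm_num : (0:ℝ) ≤ 2)]
    generalize ha : Real.sqrt 2 = a
    generalize hb : Real.sqrt Real.pi = b
    have hs2 : a ^ 2 = 2 := by rw [← ha]; exact Real.sq_sqrt (by norm_num)
    have hsp : b ^ 2 = Real.pi := by rw [← hb]; exact Real.sq_sqrt Real.pi_pos.le
    have ha0 : a ≠ 0 := by rw [← ha]; positivity
    have hb0 : b ≠ 0 := by rw [← hb]; positivity
    rw [show (4:ℝ) = 2*2 by norm_num, ← hs2, ← hsp]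
    field_simp
    ring

lemma hasDerivAt_D1fun (x1 : ℝ) {ε t : ℝ} (hε : ε = 1 ∨ ε = -1) (ht : 0 < ε * t) :
    HasDerivAt (D1 x1 ε) (D2 x1 ε t) t := by
  have htne : t ≠ 0 := by rintro rfl; simp at ht
  have hE := hasDerivAt_expE x1 t
  have hF := hasDerivAt_expF x1 t
  have hG := hasDerivAt_GG htne
  have hA : HasDerivAt (fun s : ℝ => (1/(2*Real.sqrt 2*Real.pi)) * (2*Real.pi*s))
      ((1/(2*Real.sqrt 2*Real.pi)) * (2*Real.pi*1)) t :=
    ((hasDerivAt_id t).const_mul (2*Real.pi)).const_mul (1/(2*Real.sqrt 2*Real.pi))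
  have h1 := hA.mul hE
  have hQ : HasDerivAt (fun s : ℝ => 1+2*Real.pi*s^2) (2*Real.pi*(2*t^1)) t := by
    exact ((hasDerivAt_pow 2 t).const_mul (2*Real.pi)).const_add 1
  have hB2 := ((hG.const_mul ε).mul hQ).mul hF
  have hC : HasDerivAt (fun s : ℝ => 2*Real.sqrt (2*Real.pi) * s)
      (2*Real.sqrt (2*Real.pi) * 1) t := (hasDerivAt_id t).const_mul (2*Real.sqrt (2*Real.pi))
  have hC2 := hC.mul hE
  have h2 := (hB2.sub hC2).const_mul (1/(2*Real.sqrt Real.pi))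
  have h := h1.add h2
  have hfun : D1 x1 ε = fun s : ℝ =>
      (1/(2*Real.sqrt 2*Real.pi)) * (2*Real.pi*s) * Real.exp (-(Real.pi*(x1^2+s^2)))
      + (1/(2*Real.sqrt Real.pi)) *
          (ε * Ginc (2*Real.pi*s^2) * (1+2*Real.pi*s^2) * Real.exp (-(Real.pi*(x1^2-s^2)))
           - 2*Real.sqrt (2*Real.pi) * s * Real.exp (-(Real.pi*(x1^2+s^2)))) := by
    funext s; rw [D1]
  rw [hfun]
  refine h.congr_deriv ?_
  simp only [Pi.mul_apply]
  rw [D2, rpow_half_eq hε ht]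
  have hK : Real.exp (-(2*Real.pi*t^2))
      = Real.exp (-(Real.pi*(x1^2+t^2))) / Real.exp (-(Real.pi*(x1^2-t^2))) := by
    rw [eq_div_iff (Real.exp_ne_zero _), ← Real.exp_add]
    congr 1; ring
  rw [hK]
  have prelude : True := trivial
  rcases hε with rfl | rfl
  · rw [Real.sqrt_mul (by norm_num : (0:ℝ) ≤ 2)]
    generalize ha : Real.sqrt 2 = a
    generalize hb : Real.sqrt Real.pi = b
    have hs2 : a ^ 2 = 2 := by rw [← ha]; exact Real.sq_sqrt (by norm_num)
    have hsp : b ^ 2 = Real.pi := by rw [← hb]; exact Real.sq_sqrt Real.pi_pos.le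
    have ha0 : a ≠ 0 := by rw [← ha]; positivity
    have hb0 : b ≠ 0 := by rw [← hb]; positivity
    rw [show (4:ℝ) = 2*2 by norm_num, show (6:ℝ) = 2+2+2 by norm_num, ← hs2, ← hsp]
    field_simp
    linear_combination (norm := ring_nf) (a * b * t * Ginc (a^2*b^2*t^2) * Real.exp (b^2*t^2 - b^2*x1^2)
      + a^2 * Real.exp (-(b^2*t^2) - b^2*x1^2)) * hs2
  · rw [Real.sqrt_mul (by norm_num : (0:ℝ) ≤ 2)]
    generalize ha : Real.sqrt 2 = a
    generalize hb : Real.sqrt Real.pi = b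
    have hs2 : a ^ 2 = 2 := by rw [← ha]; exact Real.sq_sqrt (by norm_num)
    have hsp : b ^ 2 = Real.pi := by rw [← hb]; exact Real.sq_sqrt Real.pi_pos.le
    have ha0 : a ≠ 0 := by rw [← ha]; positivity
    have hb0 : b ≠ 0 := by rw [← hb]; positivity
    rw [show (4:ℝ) = 2*2 by norm_num, show (6:ℝ) = 2+2+2 by norm_num, ← hs2, ← hsp]
    field_simp
    linear_combination (norm := ring_nf) (-(a * b * t * Ginc (a^2*b^2*t^2) * Real.exp (b^2*t^2 - b^2*x1^2))
      + a^2 * Real.exp (-(b^2*t^2) - b^2*x1^2)) * hs2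

lemma deriv2_snd (x1 : ℝ) {ε t : ℝ} (hε : ε = 1 ∨ ε = -1) (ht : 0 < ε * t) :
    deriv (deriv (fun s : ℝ => B (x1, s))) t = D2 x1 ε t := by
  have hUopen : IsOpen {s : ℝ | 0 < ε * s} :=
    isOpen_lt continuous_const (continuous_const.mul continuous_id)
  have hU : {s : ℝ | 0 < ε * s} ∈ nhds t := hUopen.mem_nhds ht
  have habs : ∀ s ∈ {s : ℝ | 0 < ε * s}, |s| = ε * s := by
    intro s hs
    simp only [Set.mem_setOf_eq] at hs
    rcases hε with rfl | rfl
    · rw [abs_of_pos (by linarith)]; ring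
    · rw [abs_of_neg (by nlinarith)]; ring
  have hBev : (fun s : ℝ => B (x1, s)) =ᶠ[nhds t] (fun s : ℝ =>
      -(1/(2*Real.sqrt 2*Real.pi)) * Real.exp (-(Real.pi*(x1^2+s^2)))
      + (1/(2*Real.sqrt Real.pi)) * (ε*s) * Ginc (2*Real.pi*s^2) *
          Real.exp (-(Real.pi*(x1^2-s^2)))) := by
    filter_upwards [hU] with s hs
    simp only [B]
    rw [habs s hs]
  have hD1ev : deriv (fun s : ℝ => B (x1, s)) =ᶠ[nhds t] D1 x1 ε := by
    refine hBev.deriv.trans ?_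
    filter_upwards [hU] with s hs
    exact (hasDerivAt_Bfun x1 hε hs).deriv
  rw [hD1ev.deriv_eq]
  exact (hasDerivAt_D1fun x1 hε ht).deriv

lemma deriv2_gauss (C a : ℝ) :
    deriv (deriv (fun t : ℝ => C * Real.exp (-(Real.pi*t^2)))) a
      = C * (4*Real.pi^2*a^2 - 2*Real.pi) * Real.exp (-(Real.pi*a^2)) := by
  have hE : ∀ t : ℝ, HasDerivAt (fun s : ℝ => Real.exp (-(Real.pi*s^2)))
      (-(2*Real.pi*t) * Real.exp (-(Real.pi*t^2))) t := by
    intro t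
    have h := ((hasDerivAt_pow 2 t).const_mul Real.pi).neg.exp
    convert h using 1
    · rfl
    · simp only [Pi.neg_apply]; push_cast; ring
  have hd : deriv (fun t : ℝ => C * Real.exp (-(Real.pi*t^2)))
      = fun t => C * (-(2*Real.pi*t) * Real.exp (-(Real.pi*t^2))) :=
    funext fun t => ((hE t).const_mul C).deriv
  rw [hd]
  have hlin : HasDerivAt (fun t : ℝ => -(2*Real.pi*t)) (-(2*Real.pi)) a := by
    have := ((hasDerivAt_id a).const_mul (2*Real.pi)).neg
    refine this.congr_deriv ?_
    ring
  have h2 : HasDerivAt (fun t : ℝ => C * (-(2*Real.pi*t) * Real.exp (-(Real.pi*t^2))))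
      (C * (4*Real.pi^2*a^2 - 2*Real.pi) * Real.exp (-(Real.pi*a^2))) a := by
    have h := (hlin.mul (hE a)).const_mul C
    refine h.congr_deriv ?_
    ring
  exact h2.deriv

/-- From the proof of paper Proposition 5.12: outside its singular set `x₃ = 0`,
`B` is an eigenfunction of weight `2`: `(HB)(x) = 2i·B(x)`. -/
theorem stmt11 (x : ℝ × ℝ) (hx : x.2 ≠ 0) :
    Hop B x = 2 * Complex.I * ((B x : ℝ) : ℂ) := by
  obtain ⟨ε, hε, ht⟩ : ∃ ε : ℝ, (ε = 1 ∨ ε = -1) ∧ 0 < ε * x.2 := by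
    rcases lt_or_gt_of_ne hx with h | h
    · exact ⟨-1, Or.inr rfl, by nlinarith⟩
    · exact ⟨1, Or.inl rfl, by nlinarith⟩
  have habs : |x.2| = ε * x.2 := by
    rcases hε with rfl | rfl
    · rw [abs_of_pos (by linarith)]; ring
    · rw [abs_of_neg (by nlinarith)]; ring
  -- first variable second derivative
  have hfun : (fun t : ℝ => B (t, x.2)) = fun t : ℝ =>
      (-(1/(2*Real.sqrt 2*Real.pi)) * Real.exp (-(Real.pi*x.2^2))
        + (1/(2*Real.sqrt Real.pi)) * (ε*x.2) * Ginc (2*Real.pi*x.2^2) *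
            Real.exp (Real.pi*x.2^2)) * Real.exp (-(Real.pi*t^2)) := by
    funext t
    simp only [B]
    rw [habs,
      show (-(Real.pi*(t^2+x.2^2))) = -(Real.pi*t^2) + -(Real.pi*x.2^2) by ring, Real.exp_add,
      show (-(Real.pi*(t^2-x.2^2))) = -(Real.pi*t^2) + Real.pi*x.2^2 by ring, Real.exp_add]
    ring
  have hder1 : deriv (deriv (fun t : ℝ => B (t, x.2))) x.1
      = (-(1/(2*Real.sqrt 2*Real.pi)) * Real.exp (-(Real.pi*x.2^2))
        + (1/(2*Real.sqrt Real.pi)) * (ε*x.2) * Ginc (2*Real.pi*x.2^2) *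
            Real.exp (Real.pi*x.2^2)) * (4*Real.pi^2*x.1^2 - 2*Real.pi) *
          Real.exp (-(Real.pi*x.1^2)) := by
    rw [hfun, deriv2_gauss]
  have hder2 : deriv (deriv (fun t : ℝ => B (x.1, t))) x.2 = D2 x.1 ε x.2 :=
    deriv2_snd x.1 hε ht
  -- the key real identity
  have key : (-(1/(2*Real.sqrt 2*Real.pi)) * Real.exp (-(Real.pi*x.2^2))
        + (1/(2*Real.sqrt Real.pi)) * (ε*x.2) * Ginc (2*Real.pi*x.2^2) *
            Real.exp (Real.pi*x.2^2)) * (4*Real.pi^2*x.1^2 - 2*Real.pi) *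
          Real.exp (-(Real.pi*x.1^2)) - D2 x.1 ε x.2
      = 4*Real.pi*(Real.pi*(x.1^2-x.2^2) - 2) * B x := by
    rw [D2, B, habs,
      show (-(Real.pi*(x.1^2+x.2^2))) = -(Real.pi*x.1^2) + -(Real.pi*x.2^2) by ring, Real.exp_add,
      show (-(Real.pi*(x.1^2-x.2^2))) = -(Real.pi*x.1^2) + Real.pi*x.2^2 by ring, Real.exp_add,
      Real.exp_neg (Real.pi*x.2^2),
      Real.sqrt_mul (by norm_num : (0:ℝ) ≤ 2)]
    generalize ha : Real.sqrt 2 = a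
    generalize hb : Real.sqrt Real.pi = b
    have hs2 : a ^ 2 = 2 := by rw [← ha]; exact Real.sq_sqrt (by norm_num)
    have hsp : b ^ 2 = Real.pi := by rw [← hb]; exact Real.sq_sqrt Real.pi_pos.le
    have ha0 : a ≠ 0 := by rw [← ha]; positivity
    have hb0 : b ≠ 0 := by rw [← hb]; positivity
    rw [show (4:ℝ) = 2*2 by norm_num, show (6:ℝ) = 2+2+2 by norm_num, ← hs2, ← hsp]
    field_simp
    linear_combination (norm := ring_nf) ((a^2+2)*a*b*ε*x.2*Ginc (a^2*b^2*x.2^2) *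
      Real.exp (b^2*x.2^2)^2) * hs2
  rw [Hop, hder1, hder2]
  have keyC : ((((-(1/(2*Real.sqrt 2*Real.pi)) * Real.exp (-(Real.pi*x.2^2))
        + (1/(2*Real.sqrt Real.pi)) * (ε*x.2) * Ginc (2*Real.pi*x.2^2) *
            Real.exp (Real.pi*x.2^2)) * (4*Real.pi^2*x.1^2 - 2*Real.pi) *
          Real.exp (-(Real.pi*x.1^2)) - D2 x.1 ε x.2 : ℝ)) : ℂ)
      = ((4*Real.pi*(Real.pi*(x.1^2-x.2^2) - 2) * B x : ℝ) : ℂ) := by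
    exact_mod_cast congrArg Complex.ofReal key
  rw [keyC]
  have hπ : (Real.pi : ℂ) ≠ 0 := Complex.ofReal_ne_zero.2 Real.pi_ne_zero
  push_cast
  field_simp
  ring
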